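/- Let T : E → E be a linear map of a finite-dimensional complex vector space E, and suppose there exists a finite set S ⊆ E with T(S) ⊆ S whose span equals E. Then every eigenvalue of T is either 0 or a root of unity. -/
import Mathlib


theorem eigenvalues_zero_or_root_of_unity
    (E : Type*) [AddCommGroup E] [Module ℂ E] [FiniteDimensional ℂ E]
    (T : E →ₗ[ℂ] E) (S : Set E) (hSfin : S.Finite) (hTS : T '' S ⊆ S)
    (hspan : Submodule.span ℂ S = ⊤) :
    ∀ μ : ℂ, Module.End.HasEigenvalue T μ → μ = 0 ∨ ∃ n : ℕ, 0 < n ∧ μ ^ n = 1 := by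
  intro μ hμ
  -- T^k maps S into S
  have hmap : ∀ k : ℕ, ∀ x ∈ S, (T ^ k) x ∈ S := by
    intro k
    induction k with
    | zero => intro x hx; simpa using hx
    | succ k ih =>
      intro x hx
      have : (T ^ (k + 1)) x = T ((T ^ k) x) := by
        rw [pow_succ']
        rfl
      rw [this]
      exact hTS ⟨(T ^ k) x, ih x hx, rfl⟩
  haveI := hSfin.to_subtype
  set F : ℕ → (S → S) := fun k x => ⟨(T ^ k) x, hmap k x x.2⟩ with hF
  obtain ⟨m, n, hmn, heq⟩ := Finite.exists_ne_map_eq_of_infinite F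
  wlog hlt : m < n generalizing m n
  · exact this n m hmn.symm heq.symm (by omega)
  -- T^m = T^n as linear maps
  have hTpow : (T ^ m : E →ₗ[ℂ] E) = T ^ n := by
    apply LinearMap.ext_on hspan
    intro x hx
    have := congrFun heq ⟨x, hx⟩
    exact congrArg Subtype.val this
  obtain ⟨v, hv⟩ := hμ.exists_hasEigenvector
  have hv0 := hv.right
  have hpm : (T ^ m) v = μ ^ m • v := hv.pow_apply m
  have hpn : (T ^ n) v = μ ^ n • v := hv.pow_apply n
  have hμeq : μ ^ m = μ ^ n := by
    have : μ ^ m • v = μ ^ n • v := by rw [← hpm, ← hpn, hTpow]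
    by_contra hne
    exact hv0 (by
      have := sub_eq_zero_of_eq this
      rw [← sub_smul] at this
      exact (smul_eq_zero.mp this).resolve_left (sub_ne_zero_of_ne hne))
  by_cases hμ0 : μ = 0
  · exact Or.inl hμ0
  · right
    refine ⟨n - m, by omega, ?_⟩
    have h1 : μ ^ m * μ ^ (n - m) = μ ^ m * 1 := by
      rw [mul_one, ← pow_add, hμeq]
      congr 1
      omega
    exact mul_left_cancel₀ (pow_ne_zero m hμ0) h1
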